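/- Let R₂ be a finite ring with Jacobson radical J₂ such that R₂/J₂ has a direct factor isomorphic to Mₙ(F) for a finite field F and n ≥ 2. Then R₂ contains an element b with b² = 0 but b ∉ J₂ (in particular R₂ contains a nonzero nilpotent element outside its Jacobson radical). -/

import Mathlib

/-- Let `R₂` be a finite ring with Jacobson radical
`J₂ = {x | ∀ y, IsUnit (1 − x y)}`, such that `R₂/J₂` has a direct factor isomorphic to
`Mₙ(F)` for a finite field `F` and `n ≥ 2` (expressed via a surjective ring homomorphism
onto `Mₙ(F) × T` with kernel `J₂`).  Then `R₂` contains an element `b` with `b² = 0` but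
`b ∉ J₂`; in particular, `R₂` has a nonzero nilpotent element outside its Jacobson
radical. -/
theorem stmt_19 {R₂ F : Type*} [Ring R₂] [Finite R₂] [Field F] [Finite F]
    (n : ℕ) (hn : 2 ≤ n)
    (h : ∃ (T : Type) (_ : Ring T)
        (π : R₂ →+* (Matrix (Fin n) (Fin n) F × T)),
        Function.Surjective π ∧
        ∀ x : R₂, π x = 0 ↔ (∀ y : R₂, IsUnit (1 - x * y))) :
    ∃ b : R₂, b ^ 2 = 0 ∧ ¬ (∀ y : R₂, IsUnit (1 - b * y)) := by
  obtain ⟨T, _, π, hsurj, hker⟩ := h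
  -- kernel is nil
  have hnil : ∀ x ∈ RingHom.ker π, IsNilpotent x := by
    intro x hx
    rw [RingHom.mem_ker, hker] at hx
    obtain ⟨i, j, hij, hpow⟩ := Finite.exists_ne_map_eq_of_infinite (fun k : ℕ => x ^ k)
    wlog hlt : i < j generalizing i j
    · exact this j i hij.symm hpow.symm (by omega)
    rcases Nat.eq_zero_or_pos i with rfl | hi
    · -- x ^ 0 = x ^ j, so 1 = x ^ j; then 1 - x * x^(j-1) = 0 is a unit: ring trivial
      have h2 : x * x ^ (j - 1) = (1 : R₂) := by
        rw [← pow_succ', show j - 1 + 1 = j by omega, ← hpow, pow_zero]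
      have h3 := hx (x ^ (j - 1))
      rw [h2, sub_self] at h3
      have h01 : (0 : R₂) = 1 := isUnit_zero_iff.mp h3
      haveI := subsingleton_of_zero_eq_one h01
      exact ⟨1, Subsingleton.elim _ _⟩
    · refine ⟨i, ?_⟩
      have hu : IsUnit (1 - x * x ^ (j - i - 1)) := hx _
      have key : x ^ i * (1 - x * x ^ (j - i - 1)) = 0 := by
        rw [show x * x ^ (j - i - 1) = x ^ (j - i) by
              rw [← pow_succ', show j - i - 1 + 1 = j - i by omega],
            mul_sub, mul_one, ← pow_add, show i + (j - i) = j by omega, hpow, sub_self]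
      obtain ⟨u, hu⟩ := hu
      calc x ^ i = x ^ i * (1 - x * x ^ (j - i - 1)) * ↑u⁻¹ := by
            rw [← hu, mul_assoc, u.mul_inv, mul_one]
        _ = 0 := by rw [key, zero_mul]
  -- indices
  have h01 : (⟨0, by omega⟩ : Fin n) ≠ ⟨1, by omega⟩ := by
    simp [Fin.ext_iff]
  set i0 : Fin n := ⟨0, by omega⟩
  set i1 : Fin n := ⟨1, by omega⟩
  set E00 : Matrix (Fin n) (Fin n) F × T := (Matrix.single i0 i0 1, 0)
  set E01 : Matrix (Fin n) (Fin n) F × T := (Matrix.single i0 i1 1, 0)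
  have hE00 : IsIdempotentElem E00 := by
    simp only [IsIdempotentElem, E00, Prod.mk_mul_mk, mul_zero]
    rw [Matrix.single_mul_single_same, mul_one]
  obtain ⟨e, he, hπe⟩ := exists_isIdempotentElem_eq_of_ker_isNilpotent π hnil E00
    (hsurj E00) hE00
  obtain ⟨a, hπa⟩ := hsurj E01
  refine ⟨e * a * (1 - e), ?_, ?_⟩
  · have h0 : (1 - e) * e = 0 := by rw [sub_mul, one_mul, he.eq, sub_self]
    calc (e * a * (1 - e)) ^ 2
        = e * a * ((1 - e) * e * (a * (1 - e))) := by noncomm_ring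
      _ = 0 := by rw [h0, zero_mul, mul_zero]
  · rw [← hker]
    have : π (e * a * (1 - e)) = E01 := by
      rw [map_mul, map_mul, map_sub, map_one, hπe, hπa]
      have h1 : E00 * E01 = E01 := by
        simp only [E00, E01, Prod.mk_mul_mk, mul_zero]
        rw [Matrix.single_mul_single_same, one_mul]
      have h2 : E01 * E00 = 0 := by
        simp only [E00, E01, Prod.mk_mul_mk, mul_zero, Prod.mk_eq_zero]
        exact ⟨Matrix.single_mul_single_of_ne _ _ _ _ h01.symm _, trivial⟩
      rw [h1, mul_sub, mul_one, h2, sub_zero]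
    rw [this]
    intro hE
    have : (Matrix.single i0 i1 (1 : F)) i0 i1 = 0 := by
      have := congrArg Prod.fst hE
      simp only [E01] at this
      rw [this]; rfl
    rw [Matrix.single_apply_same] at this
    exact one_ne_zero this
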